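/- Let t ∈ P and let ε_1, …, ε_m be real numbers with ε_j < a_j − t_j for every j. If t = s⁰ → s¹ → ⋯ → s^K is any rewrite sequence from t and 0 ≤ k < k' ≤ K, then there exists an index j with |s^{k'}_j − s^k_j| > ε_j; in other words, any box of size ε_1 × ⋯ × ε_m contains at most one of the vectors s⁰, s¹, …, s^K. -/

import Mathlib

open scoped BigOperators

/-- One step `s → s'` of the continuous O'Hara algorithm on `ℝ^m`:
for some index `j` with `s_j ≥ b_j`, subtract `b_j` from the `j`-th
coordinate and add `a_{j-1}` to the `(j-1)`-st coordinate
(indices cyclically modulo `m`). -/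
def CStep (m : ℕ) [NeZero m] (a b : Fin m → ℝ) (s s' : Fin m → ℝ) : Prop :=
  ∃ j : Fin m, b j ≤ s j ∧
    ∀ l, s' l = s l + (if l = j - 1 then a (j - 1) else 0)
                    - (if l = j then b j else 0)

/-- Membership in the half-open box `[0,a_1) × ⋯ × [0,a_m)`. -/
def InBox {m : ℕ} (a : Fin m → ℝ) (t : Fin m → ℝ) : Prop :=
  ∀ j, 0 ≤ t j ∧ t j < a j

/-- Number of `r < n` with `J r = q`. -/
private def cnt {m : ℕ} (J : ℕ → Fin m) (q : Fin m) (n : ℕ) : ℕ :=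
  ((Finset.range n).filter (fun r => J r = q)).card

private lemma cnt_zero {m : ℕ} (J : ℕ → Fin m) (q : Fin m) : cnt J q 0 = 0 := by
  simp [cnt]

private lemma cnt_succ {m : ℕ} (J : ℕ → Fin m) (q : Fin m) (n : ℕ) :
    cnt J q (n + 1) = cnt J q n + (if J n = q then 1 else 0) := by
  simp only [cnt, Finset.range_add_one, Finset.filter_insert]
  by_cases h : J n = q
  · rw [if_pos h, if_pos h, Finset.card_insert_of_notMem (by simp)]
  · rw [if_neg h, if_neg h, add_zero]

private lemma cnt_mono {m : ℕ} (J : ℕ → Fin m) (q : Fin m) {n n' : ℕ} (h : n ≤ n') :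
    cnt J q n ≤ cnt J q n' :=
  Finset.card_le_card (Finset.filter_subset_filter _ (Finset.range_subset_range.2 h))

private lemma cnt_step {m : ℕ} (J : ℕ → Fin m) (q : Fin m) {r n : ℕ}
    (h : r < n) (hq : J r = q) : cnt J q r + 1 ≤ cnt J q n := by
  have h1 : cnt J q (r + 1) = cnt J q r + 1 := by rw [cnt_succ, if_pos hq]
  calc cnt J q r + 1 = cnt J q (r + 1) := h1.symm
    _ ≤ cnt J q n := cnt_mono J q h

/-- If there are at least `j+1` occurrences of `q` before `n`, then the `(j+1)`-st
occurrence exists: some `r < n` with `J r = q` and exactly `j` earlier occurrences. -/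
private lemma cnt_find {m : ℕ} (J : ℕ → Fin m) (q : Fin m) (j : ℕ) :
    ∀ n : ℕ, j + 1 ≤ cnt J q n → ∃ r, r < n ∧ J r = q ∧ cnt J q r = j := by
  intro n
  induction n with
  | zero => intro h; rw [cnt_zero] at h; omega
  | succ n ih =>
    intro h
    have hs := cnt_succ J q n
    by_cases hq : J n = q
    · rw [if_pos hq] at hs
      by_cases hlt : j + 1 ≤ cnt J q n
      · obtain ⟨r, hr, h1, h2⟩ := ih hlt
        exact ⟨r, hr.trans (Nat.lt_succ_self n), h1, h2⟩
      · have hje : cnt J q n = j := by omega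
        exact ⟨n, Nat.lt_succ_self n, hq, hje⟩
    · rw [if_neg hq] at hs
      obtain ⟨r, hr, h1, h2⟩ := ih (by omega)
      exact ⟨r, hr.trans (Nat.lt_succ_self n), h1, h2⟩

/-- along any rewrite sequence from `t ∈ P`, no box of size
`ε_1 × ⋯ × ε_m` with `ε_j < a_j - t_j` contains two of the intermediate
vectors: for `k < k'` there is a coordinate `j` with `|s^{k'}_j - s^k_j| > ε_j`. -/
theorem ohara_box_lemma {m : ℕ} [NeZero m] (i a b : Fin m → ℝ)
    (hi : ∀ j, 0 < i j) (ha : ∀ j, 0 < a j) (hb : ∀ j, 0 < b j)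
    (hiab : ∀ j, i j * a j = i (j + 1) * b (j + 1))
    (t : Fin m → ℝ) (ht : InBox a t)
    (eps : Fin m → ℝ) (heps : ∀ j, eps j < a j - t j)
    (s : ℕ → Fin m → ℝ) (K : ℕ) (hs0 : s 0 = t)
    (hstep : ∀ k < K, CStep m a b (s k) (s (k + 1)))
    (k k' : ℕ) (hk : k < k') (hk' : k' ≤ K) :
    ∃ j, eps j < |s k' j - s k j| := by
  classical
  have hkK : k ≤ K := le_trans (le_of_lt hk) hk'
  -- choose the fired index at each step
  have hex : ∀ r : ℕ, ∃ j : Fin m, r < K →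
      b j ≤ s r j ∧ ∀ l, s (r + 1) l
        = s r l + (if l = j - 1 then a (j - 1) else 0) - (if l = j then b j else 0) := by
    intro r
    by_cases h : r < K
    · obtain ⟨j, h1, h2⟩ := hstep r h
      exact ⟨j, fun _ => ⟨h1, h2⟩⟩
    · exact ⟨0, fun h' => absurd h' h⟩
  choose J hJ using hex
  -- the coordinate formula
  have hfor : ∀ n, n ≤ K → ∀ l, s n l
      = t l + a l * (cnt J (l + 1) n : ℝ) - b l * (cnt J l n : ℝ) := by
    intro n
    induction n with
    | zero =>
      intro _ l
      simp [cnt_zero, hs0]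
    | succ n ih =>
      intro hn l
      obtain ⟨_, hstep'⟩ := hJ n (Nat.lt_of_succ_le hn)
      rw [hstep' l, ih (Nat.le_of_succ_le hn) l, cnt_succ J (l + 1) n, cnt_succ J l n]
      open Fin.CommRing Fin.NatCast in
      have h1 : (l = J n - 1) ↔ (J n = l + 1) := by
        constructor
        · intro h; rw [h]; ring
        · intro h; rw [h]; ring
      by_cases h2 : J n = l + 1 <;> by_cases h3 : J n = l
      · have hA : l = J n - 1 := h1.mpr h2
        rw [if_pos hA, if_pos h3.symm, if_pos h2, if_pos h3, ← hA, h3]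
        push_cast; ring
      · have hA : l = J n - 1 := h1.mpr h2
        rw [if_pos hA, if_neg (fun hh => h3 hh.symm), if_pos h2, if_neg h3, ← hA]
        push_cast; ring
      · rw [if_neg (fun hh => h2 (h1.mp hh)), if_pos h3.symm, if_neg h2, if_pos h3, h3]
        push_cast; ring
      · rw [if_neg (fun hh => h2 (h1.mp hh)), if_neg (fun hh => h3 hh.symm),
          if_neg h2, if_neg h3]
        push_cast; ring
  -- window counts
  set c : Fin m → ℕ := fun q => cnt J q k' - cnt J q k with hcdef
  have hmk : ∀ q : Fin m, cnt J q k ≤ cnt J q k' := fun q => cnt_mono J q (le_of_lt hk)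
  have hcc : ∀ q, cnt J q k + c q = cnt J q k' := fun q => Nat.add_sub_cancel' (hmk q)
  have hcR : ∀ q, (c q : ℝ) = (cnt J q k' : ℝ) - (cnt J q k : ℝ) := by
    intro q
    rw [eq_sub_iff_add_eq, ← Nat.cast_add]
    norm_cast
    rw [add_comm]
    exact hcc q
  have hdel : ∀ l, s k' l - s k l = a l * (c (l + 1) : ℝ) - b l * (c l : ℝ) := by
    intro l
    rw [hfor k' hk' l, hfor k hkK l, hcR, hcR]
    ring
  -- the index fired at time k has c ≥ 1
  have hJk : 1 ≤ c (J k) := by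
    have h1 : cnt J (J k) k + 1 ≤ cnt J (J k) k' := cnt_step J (J k) hk rfl
    have h2 := hcc (J k)
    omega
  by_cases hall : ∀ q : Fin m, 1 ≤ c q
  · -- hard case: every index fires in the window
    have hex3 : ∀ q : Fin m, ∃ r, J r = q ∧ cnt J q r = c q - 1 := by
      intro q
      have h1 : (c q - 1) + 1 ≤ cnt J q k' := by
        have := hcc q; have := hall q; omega
      obtain ⟨r, _, h2, h3⟩ := cnt_find J q (c q - 1) k' h1
      exact ⟨r, h2, h3⟩
    set ρ : Fin m → ℕ := fun q => Nat.find (hex3 q) with hρdef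
    have hρ : ∀ q, J (ρ q) = q ∧ cnt J q (ρ q) = c q - 1 := fun q => Nat.find_spec (hex3 q)
    have hρk' : ∀ q, ρ q < k' := by
      intro q
      have h1 : (c q - 1) + 1 ≤ cnt J q k' := by
        have := hcc q; have := hall q; omega
      obtain ⟨r, hr1, hr2, hr3⟩ := cnt_find J q (c q - 1) k' h1
      exact lt_of_le_of_lt (Nat.find_min' (hex3 q) ⟨hr2, hr3⟩) hr1
    -- key combinatorial fact
    have key : ∃ l : Fin m, cnt J (l + 1) (ρ l) + 1 ≤ c (l + 1) := by
      by_contra hcon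
      push_neg at hcon
      have hdesc : ∀ l : Fin m, ρ (l + 1) < ρ l := by
        intro l
        have h1 : (c (l + 1) - 1) + 1 ≤ cnt J (l + 1) (ρ l) := by
          have := hcon l; have := hall (l + 1); omega
        obtain ⟨r, hr1, hr2, hr3⟩ := cnt_find J (l + 1) (c (l + 1) - 1) (ρ l) h1
        exact lt_of_le_of_lt (Nat.find_min' (hex3 (l + 1)) ⟨hr2, hr3⟩) hr1
      open Fin.CommRing Fin.NatCast in
      have hseq : ∀ u : ℕ, u + ρ ((u : ℕ) : Fin m) ≤ ρ ((0 : ℕ) : Fin m) := by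
        intro u
        induction u with
        | zero => simp
        | succ v ih =>
          have hcast : (((v + 1 : ℕ)) : Fin m) = ((v : ℕ) : Fin m) + 1 := by
            push_cast; ring
          have h2 : ρ (((v + 1 : ℕ)) : Fin m) < ρ ((v : ℕ) : Fin m) := by
            rw [hcast]; exact hdesc _
          omega
      open Fin.CommRing Fin.NatCast in
      have := hseq (ρ ((0 : ℕ) : Fin m) + 1)
      omega
    obtain ⟨l, hlt⟩ := key
    obtain ⟨hJρ, hNρ⟩ := hρ l
    have hρK : ρ l < K := lt_of_lt_of_le (hρk' l) hk'
    obtain ⟨hb_pre, _⟩ := hJ (ρ l) hρK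
    rw [hJρ] at hb_pre
    rw [hfor (ρ l) (le_of_lt hρK) l, hNρ] at hb_pre
    have hc1 : 1 ≤ c l := hall l
    have hcast1 : ((c l - 1 : ℕ) : ℝ) = (c l : ℝ) - 1 := by
      rw [Nat.cast_sub hc1, Nat.cast_one]
    rw [hcast1] at hb_pre
    -- hb_pre : b l ≤ t l + a l * cnt J (l+1) (ρ l) - b l * ((c l : ℝ) - 1)
    have hcast2 : ((cnt J (l + 1) (ρ l) : ℝ)) + 1 ≤ (c (l + 1) : ℝ) := by
      exact_mod_cast hlt
    refine ⟨l, ?_⟩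
    have hmul : a l * ((cnt J (l + 1) (ρ l) : ℝ) + 1) ≤ a l * (c (l + 1) : ℝ) :=
      mul_le_mul_of_nonneg_left hcast2 (ha l).le
    rw [mul_add, mul_one] at hmul
    have hwit : a l - t l ≤ s k' l - s k l := by
      rw [hdel l]
      linarith
    exact lt_of_lt_of_le (heps l) (le_trans hwit (le_abs_self _))
  · -- easy case: some index does not fire, but its successor does
    push_neg at hall
    obtain ⟨l0, hl0⟩ := hall
    have hl0' : c l0 = 0 := by omega
    open Fin.CommRing Fin.NatCast in
    have hS : ∃ u : ℕ, 1 ≤ c (l0 + (u : Fin m)) := by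
      refine ⟨(J k - l0).val, ?_⟩
      rw [Fin.cast_val_eq_self]
      have : l0 + (J k - l0) = J k := by ring
      rw [this]
      exact hJk
    set u := Nat.find hS with hudef
    open Fin.CommRing Fin.NatCast in
    have hu : 1 ≤ c (l0 + (u : Fin m)) := Nat.find_spec hS
    have hu1 : 1 ≤ u := by
      by_contra h
      push_neg at h
      have h0 : u = 0 := by omega
      rw [h0] at hu
      simp at hu
      omega
    open Fin.CommRing Fin.NatCast in
    have hprev : ¬ 1 ≤ c (l0 + ((u - 1 : ℕ) : Fin m)) := Nat.find_min hS (by omega)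
    open Fin.CommRing Fin.NatCast in
    set l := l0 + ((u - 1 : ℕ) : Fin m) with hldef
    have hcl : c l = 0 := by omega
    open Fin.CommRing Fin.NatCast in
    have hsucc : l + 1 = l0 + (u : Fin m) := by
      rw [hldef, add_assoc]
      congr 1
      rw [← Nat.cast_succ]
      congr 1
      omega
    have hcl1 : 1 ≤ c (l + 1) := by rw [hsucc]; exact hu
    refine ⟨l, ?_⟩
    have hd : s k' l - s k l = a l * (c (l + 1) : ℝ) := by
      rw [hdel l, hcl]
      push_cast
      ring
    have h1 : (1 : ℝ) ≤ (c (l + 1) : ℝ) := by exact_mod_cast hcl1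
    have hmul : a l * 1 ≤ a l * (c (l + 1) : ℝ) := mul_le_mul_of_nonneg_left h1 (ha l).le
    rw [mul_one] at hmul
    have hwit : a l ≤ s k' l - s k l := by rw [hd]; linarith
    have htl := (ht l).1
    calc eps l < a l - t l := heps l
      _ ≤ a l := by linarith
      _ ≤ s k' l - s k l := hwit
      _ ≤ |s k' l - s k l| := le_abs_self _
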